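/- Let G be a PLB graph on n vertices with exponent γ ∈ (2,3) and constant c₀, and fix a linear order on the vertices of G. For each vertex v, let d⁺_v denote the number of neighbors u of v such that either deg(u) > deg(v), or deg(u) = deg(v) and u comes after v in the linear order. Then Σ_v (d⁺_v)^2 ≤ C · n^{3/γ} for a constant C depending only on c₀ and γ. -/

import Mathlib

/-- The number of vertices of `G` of degree exactly `d`. -/
noncomputable def degCount {V : Type*} [Fintype V] (G : SimpleGraph V) (d : ℕ) : ℕ :=
  {v : V | {u | G.Adj v u}.ncard = d}.ncard

/-- `G` is power-law bounded with exponent `γ` and constant `c₀` if for every `r ≥ 0`,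
`Σ_{d=2^r}^{2^(r+1)} n(d) ≤ c₀ n Σ_{d=2^r}^{2^(r+1)} d^(-γ)`. -/
def IsPLB {V : Type*} [Fintype V] (G : SimpleGraph V) (γ c₀ : ℝ) : Prop :=
  ∀ r : ℕ,
    (∑ d ∈ Finset.Icc (2 ^ r : ℕ) (2 ^ (r + 1)), (degCount G d : ℝ)) ≤
      c₀ * (Fintype.card V : ℝ) *
        ∑ d ∈ Finset.Icc (2 ^ r : ℕ) (2 ^ (r + 1)), (d : ℝ) ^ (-γ)

/-- The out-degree of `v` when each edge of `G` is directed from its lower-degree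
endpoint to its higher-degree endpoint (ties broken by the linear order): the number
of neighbors `u` of `v` with `deg u > deg v`, or `deg u = deg v` and `v < u`. -/
noncomputable def outDeg {V : Type*} [Fintype V] [LinearOrder V]
    (G : SimpleGraph V) (v : V) : ℕ :=
  {u : V | G.Adj v u ∧
    ({w | G.Adj v w}.ncard < {w | G.Adj u w}.ncard ∨
      ({w | G.Adj u w}.ncard = {w | G.Adj v w}.ncard ∧ v < u))}.ncard

namespace PLBAux

open Finset
open scoped Classical

variable {V : Type} [Fintype V] [LinearOrder V] (G : SimpleGraph V)

/-- degree of a vertex -/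
noncomputable def dg (v : V) : ℕ := {w | G.Adj v w}.ncard

/-- vertices with degree in the dyadic block `[2^s, 2^(s+1))` -/
noncomputable def Ablock (s : ℕ) : Finset V :=
  Finset.univ.filter fun v => dg G v ∈ Finset.Ico (2 ^ s) (2 ^ (s + 1))

/-- vertices of degree at least `k` -/
noncomputable def NgeF (k : ℕ) : Finset V :=
  Finset.univ.filter fun v => k ≤ dg G v

lemma dg_le_card (v : V) : dg G v ≤ Fintype.card V := by
  have := Set.ncard_le_ncard (Set.subset_univ {w | G.Adj v w}) Set.finite_univ
  simpa [dg, Set.ncard_univ, Nat.card_eq_fintype_card] using this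

lemma outDeg_le_dg (v : V) : outDeg G v ≤ dg G v :=
  Set.ncard_le_ncard (fun u hu => hu.1) (Set.toFinite _)

lemma degCount_eq (d : ℕ) :
    degCount G d = (Finset.univ.filter fun v => dg G v = d).card := by
  rw [degCount, Set.ncard_eq_toFinset_card', Set.toFinset_setOf]
  congr 1

lemma outDeg_le_NgeF (v : V) : outDeg G v ≤ (NgeF G (dg G v)).card := by
  rw [outDeg, Set.ncard_eq_toFinset_card', Set.toFinset_setOf]
  apply Finset.card_le_card
  intro u hu
  simp only [Finset.mem_filter, Finset.mem_univ, true_and, NgeF] at *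
  rcases hu.2 with h | h
  · exact le_of_lt h
  · exact le_of_eq h.1.symm

lemma NgeF_subset {k l : ℕ} (h : k ≤ l) : NgeF G l ⊆ NgeF G k := by
  intro v hv
  simp only [NgeF, Finset.mem_filter, Finset.mem_univ, true_and] at *
  omega

lemma card_Ablock_le_sum (s : ℕ) :
    (Ablock G s).card ≤ ∑ d ∈ Finset.Icc (2 ^ s) (2 ^ (s + 1)), degCount G d := by
  rw [Finset.card_eq_sum_card_fiberwise (f := dg G) (s := Ablock G s)
    (t := Finset.Ico (2 ^ s) (2 ^ (s + 1)))
    (fun v hv => (Finset.mem_filter.mp hv).2)]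
  calc ∑ d ∈ Finset.Ico (2 ^ s) (2 ^ (s + 1)), ((Ablock G s).filter fun v => dg G v = d).card
      ≤ ∑ d ∈ Finset.Ico (2 ^ s) (2 ^ (s + 1)), degCount G d := by
        apply Finset.sum_le_sum
        intro d _
        rw [degCount_eq]
        exact Finset.card_le_card (Finset.filter_subset_filter _ (Finset.filter_subset _ _))
    _ ≤ ∑ d ∈ Finset.Icc (2 ^ s) (2 ^ (s + 1)), degCount G d :=
        Finset.sum_le_sum_of_subset Finset.Ico_subset_Icc_self

lemma rpow_pow {b : ℝ} (hb : 0 ≤ b) (a : ℝ) (s : ℕ) : (b ^ a) ^ s = b ^ (a * s) := by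
  rw [← Real.rpow_natCast (b ^ a) s, ← Real.rpow_mul hb]

lemma inv_sum_le {γ : ℝ} (hγ : 2 < γ) (s : ℕ) :
    ∑ d ∈ Finset.Icc (2 ^ s : ℕ) (2 ^ (s + 1)), (d : ℝ) ^ (-γ) ≤
      2 * ((2 : ℝ) ^ (1 - γ)) ^ s := by
  have h2s : (0 : ℝ) < (2 : ℝ) ^ (s : ℝ) := Real.rpow_pos_of_pos two_pos _
  have hcard : (Finset.Icc (2 ^ s : ℕ) (2 ^ (s + 1))).card = 2 ^ s + 1 := by
    rw [Nat.card_Icc, pow_succ]; omega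
  calc ∑ d ∈ Finset.Icc (2 ^ s : ℕ) (2 ^ (s + 1)), (d : ℝ) ^ (-γ)
      ≤ ∑ _d ∈ Finset.Icc (2 ^ s : ℕ) (2 ^ (s + 1)), ((2 : ℝ) ^ (s : ℝ)) ^ (-γ) := by
        apply Finset.sum_le_sum
        intro d hd
        apply Real.rpow_le_rpow_of_nonpos h2s ?_ (by linarith)
        have h1 := (Finset.mem_Icc.mp hd).1
        have : ((2 ^ s : ℕ) : ℝ) ≤ (d : ℝ) := by exact_mod_cast h1
        calc (2 : ℝ) ^ (s : ℝ) = ((2 ^ s : ℕ) : ℝ) := by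
              rw [Real.rpow_natCast]; push_cast; ring
          _ ≤ (d : ℝ) := this
    _ = ((2 ^ s + 1 : ℕ) : ℝ) * ((2 : ℝ) ^ (s : ℝ)) ^ (-γ) := by
        rw [Finset.sum_const, hcard, nsmul_eq_mul]
    _ ≤ (2 * (2 : ℝ) ^ (s : ℝ)) * ((2 : ℝ) ^ (s : ℝ)) ^ (-γ) := by
        apply mul_le_mul_of_nonneg_right ?_ (Real.rpow_nonneg h2s.le _)
        push_cast
        rw [Real.rpow_natCast]
        have : (1 : ℝ) ≤ 2 ^ s := one_le_pow₀ (by norm_num)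
        push_cast
        linarith
    _ = 2 * ((2 : ℝ) ^ (1 - γ)) ^ s := by
        rw [rpow_pow (by norm_num) (1 - γ) s,
          ← Real.rpow_mul (by norm_num : (0:ℝ) ≤ 2), mul_assoc, ← Real.rpow_add two_pos]
        have h : (s:ℝ) + (s:ℝ) * (-γ) = (1 - γ) * (s:ℝ) := by ring
        rw [h]

lemma card_Ablock_le {γ c₀ : ℝ} (hγ : 2 < γ) (hc₀ : 0 < c₀) (hPLB : IsPLB G γ c₀) (s : ℕ) :
    ((Ablock G s).card : ℝ) ≤
      2 * c₀ * (Fintype.card V : ℝ) * ((2 : ℝ) ^ (1 - γ)) ^ s := by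
  have h1 : ((Ablock G s).card : ℝ) ≤
      ∑ d ∈ Finset.Icc (2 ^ s : ℕ) (2 ^ (s + 1)), (degCount G d : ℝ) := by
    exact_mod_cast card_Ablock_le_sum G s
  have h2 := hPLB s
  have h3 := inv_sum_le hγ (s := s)
  have hn : (0 : ℝ) ≤ (Fintype.card V : ℝ) := Nat.cast_nonneg _
  calc ((Ablock G s).card : ℝ) ≤ _ := h1
    _ ≤ _ := h2
    _ ≤ c₀ * (Fintype.card V : ℝ) * (2 * ((2 : ℝ) ^ (1 - γ)) ^ s) := by
        apply mul_le_mul_of_nonneg_left h3 (by positivity)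
    _ = 2 * c₀ * (Fintype.card V : ℝ) * ((2 : ℝ) ^ (1 - γ)) ^ s := by ring

lemma geom_head {p : ℝ} (hp : 1 < p) (m : ℕ) :
    ∑ s ∈ Finset.range m, p ^ s ≤ p ^ m / (p - 1) := by
  rw [geom_sum_eq (ne_of_gt hp)]
  have h : (0:ℝ) < p - 1 := by linarith
  gcongr
  linarith

lemma geom_tail {q : ℝ} (hq0 : 0 ≤ q) (hq1 : q < 1) (m n : ℕ) :
    ∑ s ∈ Finset.Ico m n, q ^ s ≤ q ^ m / (1 - q) := by
  have h1q : (0:ℝ) < 1 - q := by linarith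
  rw [Finset.sum_Ico_eq_sum_range]
  have hpa : ∀ i, q ^ (m + i) = q ^ m * q ^ i := fun i => pow_add q m i
  rw [Finset.sum_congr rfl fun i _ => hpa i, ← Finset.mul_sum]
  have hsum : ∑ i ∈ Finset.range (n - m), q ^ i ≤ 1 / (1 - q) := by
    have key : (q ^ (n - m) - 1) / (q - 1) = (1 - q ^ (n - m)) / (1 - q) := by
      rw [div_eq_div_iff (sub_ne_zero.mpr (ne_of_lt hq1)) h1q.ne']
      ring
    rw [geom_sum_eq (ne_of_lt hq1), key]
    have hnum : 1 - q ^ (n - m) ≤ 1 := by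
      have := pow_nonneg hq0 (n - m); linarith
    exact div_le_div_of_nonneg_right hnum h1q.le
  calc q ^ m * ∑ i ∈ Finset.range (n - m), q ^ i ≤ q ^ m * (1 / (1 - q)) := by
        apply mul_le_mul_of_nonneg_left hsum (pow_nonneg hq0 _)
    _ = q ^ m / (1 - q) := by ring


lemma log_mem (v : V) (h : dg G v ≠ 0) :
    dg G v ∈ Finset.Ico (2 ^ Nat.log 2 (dg G v)) (2 ^ (Nat.log 2 (dg G v) + 1)) := by
  rw [Finset.mem_Ico]
  exact ⟨Nat.pow_log_le_self 2 h, Nat.lt_pow_succ_log_self (by norm_num) _⟩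

lemma log_lt_R (v : V) (h : dg G v ≠ 0) : Nat.log 2 (dg G v) < Fintype.card V + 1 := by
  have h1 : 2 ^ Nat.log 2 (dg G v) ≤ dg G v := Nat.pow_log_le_self 2 h
  have h2 : Nat.log 2 (dg G v) < 2 ^ Nat.log 2 (dg G v) := Nat.lt_two_pow_self
  have h3 := dg_le_card G v
  omega

lemma mem_Ablock_log (v : V) (h : dg G v ≠ 0) : v ∈ Ablock G (Nat.log 2 (dg G v)) := by
  simp only [Ablock, Finset.mem_filter, Finset.mem_univ, true_and]
  exact log_mem G v h

lemma disjoint_Ablock {s t : ℕ} (h : s ≠ t) : Disjoint (Ablock G s) (Ablock G t) := by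
  rw [Finset.disjoint_left]
  intro v hvs hvt
  simp only [Ablock, Finset.mem_filter, Finset.mem_univ, true_and, Finset.mem_Ico] at hvs hvt
  rcases Nat.lt_or_ge s t with hlt | hge
  · have : 2 ^ (s + 1) ≤ 2 ^ t := Nat.pow_le_pow_right (by norm_num) hlt
    omega
  · have hlt : t < s := lt_of_le_of_ne hge (Ne.symm h)
    have : 2 ^ (t + 1) ≤ 2 ^ s := Nat.pow_le_pow_right (by norm_num) hlt
    omega

lemma sum_partition (f : V → ℝ) (hf0 : ∀ v, dg G v = 0 → f v = 0) :
    ∑ v : V, f v = ∑ s ∈ Finset.range (Fintype.card V + 1), ∑ v ∈ Ablock G s, f v := by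
  rw [← Finset.sum_biUnion (by
    intro s _ t _ hst
    exact disjoint_Ablock G hst)]
  apply (Finset.sum_subset (Finset.subset_univ _) ?_).symm
  intro v _ hv
  by_contra hne
  apply hv
  rw [Finset.mem_biUnion]
  have h0 : dg G v ≠ 0 := fun h => hne (hf0 v h)
  exact ⟨Nat.log 2 (dg G v), Finset.mem_range.mpr (log_lt_R G v h0), mem_Ablock_log G v h0⟩

lemma card_NgeF_le {γ c₀ : ℝ} (hγ : 2 < γ) (hc₀ : 0 < c₀) (hPLB : IsPLB G γ c₀) (r : ℕ) :
    ((NgeF G (2 ^ r)).card : ℝ) ≤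
      (2 * c₀ / (1 - (2 : ℝ) ^ (1 - γ))) * (Fintype.card V : ℝ) * ((2 : ℝ) ^ (1 - γ)) ^ r := by
  have hx0 : (0:ℝ) < (2 : ℝ) ^ (1 - γ) := Real.rpow_pos_of_pos two_pos _
  have hx1 : (2 : ℝ) ^ (1 - γ) < 1 :=
    Real.rpow_lt_one_of_one_lt_of_neg one_lt_two (by linarith)
  have hsub : NgeF G (2 ^ r) ⊆ (Finset.Ico r (Fintype.card V + 1)).biUnion (Ablock G) := by
    intro v hv
    simp only [NgeF, Finset.mem_filter, Finset.mem_univ, true_and] at hv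
    have h0 : dg G v ≠ 0 := by
      have := Nat.one_le_two_pow (n := r); omega
    rw [Finset.mem_biUnion]
    refine ⟨Nat.log 2 (dg G v), ?_, mem_Ablock_log G v h0⟩
    rw [Finset.mem_Ico]
    constructor
    · have h2 : dg G v < 2 ^ (Nat.log 2 (dg G v) + 1) := Nat.lt_pow_succ_log_self (by norm_num) _
      have h3 : (2:ℕ) ^ r < 2 ^ (Nat.log 2 (dg G v) + 1) := lt_of_le_of_lt hv h2
      have := (Nat.pow_lt_pow_iff_right (by norm_num : 1 < 2)).mp h3
      omega
    · exact log_lt_R G v h0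
  have hcard : (NgeF G (2 ^ r)).card ≤
      ∑ s ∈ Finset.Ico r (Fintype.card V + 1), (Ablock G s).card :=
    le_trans (Finset.card_le_card hsub) Finset.card_biUnion_le
  calc ((NgeF G (2 ^ r)).card : ℝ)
      ≤ ∑ s ∈ Finset.Ico r (Fintype.card V + 1), ((Ablock G s).card : ℝ) := by
        exact_mod_cast hcard
    _ ≤ ∑ s ∈ Finset.Ico r (Fintype.card V + 1),
          2 * c₀ * (Fintype.card V : ℝ) * ((2 : ℝ) ^ (1 - γ)) ^ s :=
        Finset.sum_le_sum fun s _ => card_Ablock_le G hγ hc₀ hPLB s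
    _ = 2 * c₀ * (Fintype.card V : ℝ) *
          ∑ s ∈ Finset.Ico r (Fintype.card V + 1), ((2 : ℝ) ^ (1 - γ)) ^ s := by
        rw [← Finset.mul_sum]
    _ ≤ 2 * c₀ * (Fintype.card V : ℝ) * (((2 : ℝ) ^ (1 - γ)) ^ r / (1 - (2 : ℝ) ^ (1 - γ))) := by
        apply mul_le_mul_of_nonneg_left (geom_tail hx0.le hx1 _ _) (by positivity)
    _ = (2 * c₀ / (1 - (2 : ℝ) ^ (1 - γ))) * (Fintype.card V : ℝ) * ((2 : ℝ) ^ (1 - γ)) ^ r := by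
        ring

end PLBAux

set_option maxHeartbeats 2000000 in
open PLBAux in
/-- For PLB graphs with exponent `γ ∈ (2,3)`, `Σ_v (d⁺_v)² ≤ C n^(3/γ)` for a
constant `C` depending only on `c₀` and `γ`. -/
theorem plb_outdeg_square_bound (γ c₀ : ℝ) (hγ1 : 2 < γ) (hγ2 : γ < 3) (hc₀ : 0 < c₀) :
    ∃ C : ℝ, 0 < C ∧
      ∀ (V : Type) [Fintype V] [LinearOrder V] (G : SimpleGraph V), IsPLB G γ c₀ →
        (∑ v : V, ((outDeg G v : ℝ)) ^ 2) ≤ C * (Fintype.card V : ℝ) ^ (3 / γ) := by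
  classical
  have hγ0 : (0:ℝ) < γ := by linarith
  set x : ℝ := (2:ℝ) ^ (1 - γ) with hxdef
  have hx0 : 0 < x := Real.rpow_pos_of_pos two_pos _
  have hx1 : x < 1 := Real.rpow_lt_one_of_one_lt_of_neg one_lt_two (by linarith)
  set c₁ : ℝ := 2 * c₀ / (1 - x) with hc₁def
  have hc₁ : 0 < c₁ := div_pos (by positivity) (by linarith)
  set p : ℝ := (2:ℝ) ^ (3 - γ) with hpdef
  have hp1 : 1 < p := by
    rw [hpdef]
    exact (Real.one_lt_rpow_iff_of_pos two_pos).mpr (Or.inl ⟨one_lt_two, by linarith⟩)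
  set q : ℝ := (2:ℝ) ^ (3 * (1 - γ)) with hqdef
  have hq0 : 0 < q := Real.rpow_pos_of_pos two_pos _
  have hq1 : q < 1 := Real.rpow_lt_one_of_one_lt_of_neg one_lt_two (by nlinarith)
  set K₁ : ℝ := 8 * c₀ / (p - 1) * (4:ℝ) ^ (3 - γ) * c₁ ^ ((3 - γ) / γ) with hK₁def
  set K₂ : ℝ := 2 * c₀ * c₁ ^ 2 / (1 - q) * c₁ ^ (3 * (1 - γ) / γ) with hK₂def
  have hK₁ : 0 < K₁ := by
    apply mul_pos (mul_pos (div_pos (by linarith) (by linarith))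
      (Real.rpow_pos_of_pos (by norm_num) _)) (Real.rpow_pos_of_pos hc₁ _)
  have hK₂ : 0 < K₂ := by
    apply mul_pos (div_pos (by positivity) (by linarith)) (Real.rpow_pos_of_pos hc₁ _)
  refine ⟨K₁ + K₂, by linarith, ?_⟩
  intro V _ _ G hPLB
  set N : ℝ := (Fintype.card V : ℝ) with hNdef
  have hN0 : (0:ℝ) ≤ N := Nat.cast_nonneg _
  by_cases hbig : 1 ≤ c₁ * N
  swap
  · -- degenerate case : the graph has no edges at all
    have h1 := card_NgeF_le G hγ1 hc₀ hPLB 0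
    rw [← hxdef, ← hNdef, ← hc₁def] at h1
    have h1' : ((NgeF G 1).card : ℝ) ≤ c₁ * N := by simpa using h1
    have hlt : ((NgeF G 1).card : ℝ) < 1 := lt_of_le_of_lt h1' (lt_of_not_ge hbig)
    have hcard0 : (NgeF G 1).card = 0 := by
      have : (NgeF G 1).card < 1 := by exact_mod_cast hlt
      omega
    have hzero : ∀ v : V, (outDeg G v : ℝ) ^ 2 = 0 := by
      intro v
      have h2 := outDeg_le_NgeF G v
      have h3 := outDeg_le_dg G v
      have h4 : outDeg G v = 0 := by
        rcases Nat.eq_zero_or_pos (dg G v) with h | h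
        · omega
        · have hsub := NgeF_subset G (show 1 ≤ dg G v from h)
          have := Finset.card_le_card hsub
          omega
      simp [h4]
    rw [Finset.sum_eq_zero fun v _ => hzero v]
    positivity
  · have hN1 : (0:ℝ) < N := by nlinarith
    set R : ℕ := Fintype.card V + 1 with hRdef
    set M : ℕ → ℝ := fun s => min ((2:ℝ) ^ (s + 1)) (c₁ * N * x ^ s) with hMdef
    have hM0 : ∀ s, 0 ≤ M s := fun s => le_min (by positivity) (by positivity)
    -- pointwise bound inside a dyadic block
    have hblock : ∀ s : ℕ, ∀ v ∈ Ablock G s, (outDeg G v : ℝ) ^ 2 ≤ M s ^ 2 := by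
      intro s v hv
      simp only [Ablock, Finset.mem_filter, Finset.mem_univ, true_and, Finset.mem_Ico] at hv
      have hle : (outDeg G v : ℝ) ≤ M s := by
        apply le_min
        · have ha : outDeg G v ≤ dg G v := outDeg_le_dg G v
          have hb : (outDeg G v : ℝ) ≤ ((2 ^ (s + 1) : ℕ) : ℝ) := by
            exact_mod_cast le_of_lt (lt_of_le_of_lt ha hv.2)
          calc (outDeg G v : ℝ) ≤ ((2 ^ (s + 1) : ℕ) : ℝ) := hb
            _ = (2:ℝ) ^ (s + 1) := by push_cast; ring
        · have ha := outDeg_le_NgeF G v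
          have hb : NgeF G (dg G v) ⊆ NgeF G (2 ^ s) := NgeF_subset G hv.1
          have hcc := card_NgeF_le G hγ1 hc₀ hPLB s
          rw [← hxdef, ← hNdef, ← hc₁def] at hcc
          calc (outDeg G v : ℝ) ≤ ((NgeF G (2 ^ s)).card : ℝ) := by
                exact_mod_cast le_trans ha (Finset.card_le_card hb)
            _ ≤ c₁ * N * x ^ s := hcc
      exact pow_le_pow_left₀ (Nat.cast_nonneg _) hle 2
    have hstep1 : ∑ v : V, (outDeg G v : ℝ) ^ 2
        = ∑ s ∈ Finset.range R, ∑ v ∈ Ablock G s, (outDeg G v : ℝ) ^ 2 := by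
      apply sum_partition
      intro v hv
      have h3 := outDeg_le_dg G v
      have h4 : outDeg G v = 0 := by omega
      simp [h4]
    have hstep2 : ∀ s : ℕ, ∑ v ∈ Ablock G s, (outDeg G v : ℝ) ^ 2
        ≤ 2 * c₀ * N * x ^ s * M s ^ 2 := by
      intro s
      calc ∑ v ∈ Ablock G s, (outDeg G v : ℝ) ^ 2 ≤ (Ablock G s).card • M s ^ 2 :=
            Finset.sum_le_card_nsmul _ _ _ (hblock s)
        _ = ((Ablock G s).card : ℝ) * M s ^ 2 := by rw [nsmul_eq_mul]
        _ ≤ 2 * c₀ * N * x ^ s * M s ^ 2 := by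
            apply mul_le_mul_of_nonneg_right ?_ (sq_nonneg _)
            have hcc := card_Ablock_le G hγ1 hc₀ hPLB s
            rw [← hxdef, ← hNdef] at hcc
            exact hcc
    -- the crossing scale
    set D : ℝ := (c₁ * N) ^ (1 / γ) with hDdef
    have hD1 : 1 ≤ D := Real.one_le_rpow hbig (by positivity)
    have hD0 : 0 < D := by linarith
    set rs : ℕ := Nat.clog 2 ⌈D⌉₊ with hrsdef
    have hlow : D ≤ (2:ℝ) ^ rs := by
      calc D ≤ (⌈D⌉₊ : ℝ) := Nat.le_ceil D
        _ ≤ ((2 ^ rs : ℕ) : ℝ) := by exact_mod_cast Nat.le_pow_clog one_lt_two _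
        _ = (2:ℝ) ^ rs := by push_cast; ring
    have hhigh : (2:ℝ) ^ rs ≤ 4 * D := by
      rcases le_or_gt (⌈D⌉₊) 1 with h | h
      · have h0 : rs = 0 := by rw [hrsdef, Nat.clog_of_right_le_one h]
        rw [h0, pow_zero]; linarith
      · have h2 : 2 ^ (rs - 1) < ⌈D⌉₊ := Nat.pow_pred_clog_lt_self one_lt_two h
        have h3 : 0 < rs := Nat.clog_pos one_lt_two h
        have h4 : (2:ℕ) ^ rs = 2 * 2 ^ (rs - 1) := by
          conv_lhs => rw [show rs = (rs - 1) + 1 by omega]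
          rw [pow_succ]; ring
        have h5 : (2:ℕ) ^ rs ≤ 2 * ⌈D⌉₊ := by omega
        have h6 : (⌈D⌉₊ : ℝ) < D + 1 := Nat.ceil_lt_add_one hD0.le
        have h7 : ((2 ^ rs : ℕ) : ℝ) ≤ 2 * (⌈D⌉₊ : ℝ) := by exact_mod_cast h5
        have h8 : ((2 ^ rs : ℕ) : ℝ) = (2:ℝ) ^ rs := by push_cast; ring
        linarith
    -- per-scale bound
    have hscale : ∀ s ∈ Finset.range R, 2 * c₀ * N * x ^ s * M s ^ 2 ≤
        if s < rs then 8 * c₀ * N * p ^ s else 2 * c₀ * c₁ ^ 2 * N ^ 3 * q ^ s := by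
      intro s _
      by_cases hs : s < rs
      · rw [if_pos hs]
        have h1 : M s ^ 2 ≤ ((2:ℝ) ^ (s + 1)) ^ 2 :=
          pow_le_pow_left₀ (hM0 s) (min_le_left _ _) 2
        have h2 : 2 * c₀ * N * x ^ s * M s ^ 2 ≤ 2 * c₀ * N * x ^ s * ((2:ℝ) ^ (s + 1)) ^ 2 :=
          mul_le_mul_of_nonneg_left h1 (by positivity)
        refine h2.trans (le_of_eq ?_)
        have e1 : ((2:ℝ) ^ (s + 1)) ^ 2 = (2:ℝ) ^ (((s + 1) * 2 : ℕ) : ℝ) := by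
          rw [Real.rpow_natCast, pow_mul]
        have key : x ^ s * ((2:ℝ) ^ (s + 1)) ^ 2 = 4 * p ^ s := by
          rw [hxdef, hpdef, rpow_pow (by norm_num) _ s, rpow_pow (by norm_num) _ s, e1,
            ← Real.rpow_add two_pos,
            show (4:ℝ) = (2:ℝ) ^ (2:ℝ) by rw [Real.rpow_two]; norm_num,
            ← Real.rpow_add two_pos]
          congr 1
          push_cast
          ring
        calc 2 * c₀ * N * x ^ s * ((2:ℝ) ^ (s + 1)) ^ 2
            = 2 * c₀ * N * (x ^ s * ((2:ℝ) ^ (s + 1)) ^ 2) := by ring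
          _ = 2 * c₀ * N * (4 * p ^ s) := by rw [key]
          _ = 8 * c₀ * N * p ^ s := by ring
      · rw [if_neg hs]
        have h1 : M s ^ 2 ≤ (c₁ * N * x ^ s) ^ 2 :=
          pow_le_pow_left₀ (hM0 s) (min_le_right _ _) 2
        have h2 : 2 * c₀ * N * x ^ s * M s ^ 2 ≤ 2 * c₀ * N * x ^ s * (c₁ * N * x ^ s) ^ 2 :=
          mul_le_mul_of_nonneg_left h1 (by positivity)
        refine h2.trans (le_of_eq ?_)
        have qkey : x ^ s * (x ^ s) ^ 2 = q ^ s := by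
          rw [← pow_mul, ← pow_add, hxdef, hqdef, rpow_pow (by norm_num) _ s,
            rpow_pow (by norm_num) _ (s + s * 2)]
          congr 1
          push_cast
          ring
        calc 2 * c₀ * N * x ^ s * (c₁ * N * x ^ s) ^ 2
            = 2 * c₀ * c₁ ^ 2 * N ^ 3 * (x ^ s * (x ^ s) ^ 2) := by ring
          _ = 2 * c₀ * c₁ ^ 2 * N ^ 3 * q ^ s := by rw [qkey]
    -- sum the geometric series
    have hsplit : ∑ s ∈ Finset.range R, 2 * c₀ * N * x ^ s * M s ^ 2 ≤
        8 * c₀ * N * (p ^ rs / (p - 1)) + 2 * c₀ * c₁ ^ 2 * N ^ 3 * (q ^ rs / (1 - q)) := by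
      calc ∑ s ∈ Finset.range R, 2 * c₀ * N * x ^ s * M s ^ 2
          ≤ ∑ s ∈ Finset.range R,
              (if s < rs then 8 * c₀ * N * p ^ s else 2 * c₀ * c₁ ^ 2 * N ^ 3 * q ^ s) :=
            Finset.sum_le_sum hscale
        _ = (∑ s ∈ (Finset.range R).filter (· < rs), 8 * c₀ * N * p ^ s)
            + ∑ s ∈ (Finset.range R).filter (fun s => ¬ s < rs),
                2 * c₀ * c₁ ^ 2 * N ^ 3 * q ^ s := Finset.sum_ite _ _
        _ ≤ 8 * c₀ * N * (p ^ rs / (p - 1)) + 2 * c₀ * c₁ ^ 2 * N ^ 3 * (q ^ rs / (1 - q)) := by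
            apply add_le_add
            · calc ∑ s ∈ (Finset.range R).filter (· < rs), 8 * c₀ * N * p ^ s
                  ≤ ∑ s ∈ Finset.range rs, 8 * c₀ * N * p ^ s := by
                    apply Finset.sum_le_sum_of_subset_of_nonneg
                    · intro s hs
                      simp only [Finset.mem_filter, Finset.mem_range] at hs ⊢
                      exact hs.2
                    · intro s _ _
                      positivity
                _ = 8 * c₀ * N * ∑ s ∈ Finset.range rs, p ^ s := by rw [Finset.mul_sum]
                _ ≤ 8 * c₀ * N * (p ^ rs / (p - 1)) :=
                    mul_le_mul_of_nonneg_left (geom_head hp1 rs) (by positivity)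
            · calc ∑ s ∈ (Finset.range R).filter (fun s => ¬ s < rs),
                    2 * c₀ * c₁ ^ 2 * N ^ 3 * q ^ s
                  ≤ ∑ s ∈ Finset.Ico rs R, 2 * c₀ * c₁ ^ 2 * N ^ 3 * q ^ s := by
                    apply Finset.sum_le_sum_of_subset_of_nonneg
                    · intro s hs
                      simp only [Finset.mem_filter, Finset.mem_range, Finset.mem_Ico] at hs ⊢
                      omega
                    · intro s _ _
                      positivity
                _ = 2 * c₀ * c₁ ^ 2 * N ^ 3 * ∑ s ∈ Finset.Ico rs R, q ^ s := by
                    rw [Finset.mul_sum]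
                _ ≤ 2 * c₀ * c₁ ^ 2 * N ^ 3 * (q ^ rs / (1 - q)) :=
                    mul_le_mul_of_nonneg_left (geom_tail hq0.le hq1 _ _) (by positivity)
    -- bound the geometric tails via the crossing scale
    have hprs : p ^ rs ≤ (4 * D) ^ (3 - γ) := by
      have e : p ^ rs = ((2:ℝ) ^ rs) ^ (3 - γ) := by
        rw [hpdef, rpow_pow (by norm_num) _ rs, ← Real.rpow_natCast (2:ℝ) rs,
          ← Real.rpow_mul (by norm_num)]
        congr 1
        ring
      rw [e]
      exact Real.rpow_le_rpow (by positivity) hhigh (by linarith)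
    have hqrs : q ^ rs ≤ D ^ (3 * (1 - γ)) := by
      have e : q ^ rs = ((2:ℝ) ^ rs) ^ (3 * (1 - γ)) := by
        rw [hqdef, rpow_pow (by norm_num) _ rs, ← Real.rpow_natCast (2:ℝ) rs,
          ← Real.rpow_mul (by norm_num)]
        congr 1
        ring
      rw [e]
      exact Real.rpow_le_rpow_of_nonpos hD0 hlow (by nlinarith)
    -- exponent arithmetic
    have e1 : N * (4 * D) ^ (3 - γ) = (4:ℝ) ^ (3 - γ) * c₁ ^ ((3 - γ) / γ) * N ^ ((3:ℝ) / γ) := by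
      have hDe : D ^ (3 - γ) = c₁ ^ ((3 - γ) / γ) * N ^ ((3 - γ) / γ) := by
        rw [hDdef, ← Real.rpow_mul (by positivity),
          show 1 / γ * (3 - γ) = (3 - γ) / γ by ring, Real.mul_rpow hc₁.le hN0]
      rw [Real.mul_rpow (by norm_num) hD0.le, hDe]
      have hNe : N * N ^ ((3 - γ) / γ) = N ^ ((3:ℝ) / γ) := by
        nth_rewrite 1 [← Real.rpow_one N]
        rw [← Real.rpow_add hN1]
        congr 1
        field_simp
        ring
      calc N * ((4:ℝ) ^ (3 - γ) * (c₁ ^ ((3 - γ) / γ) * N ^ ((3 - γ) / γ)))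
          = (4:ℝ) ^ (3 - γ) * c₁ ^ ((3 - γ) / γ) * (N * N ^ ((3 - γ) / γ)) := by ring
        _ = (4:ℝ) ^ (3 - γ) * c₁ ^ ((3 - γ) / γ) * N ^ ((3:ℝ) / γ) := by rw [hNe]
    have e2 : N ^ 3 * D ^ (3 * (1 - γ)) = c₁ ^ (3 * (1 - γ) / γ) * N ^ ((3:ℝ) / γ) := by
      have hDe : D ^ (3 * (1 - γ)) = c₁ ^ (3 * (1 - γ) / γ) * N ^ (3 * (1 - γ) / γ) := by
        rw [hDdef, ← Real.rpow_mul (by positivity),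
          show 1 / γ * (3 * (1 - γ)) = 3 * (1 - γ) / γ by ring, Real.mul_rpow hc₁.le hN0]
      rw [hDe]
      have hNe : N ^ (3:ℕ) * N ^ (3 * (1 - γ) / γ) = N ^ ((3:ℝ) / γ) := by
        rw [← Real.rpow_natCast N 3, ← Real.rpow_add hN1]
        congr 1
        push_cast
        field_simp
        ring
      calc N ^ 3 * (c₁ ^ (3 * (1 - γ) / γ) * N ^ (3 * (1 - γ) / γ))
          = c₁ ^ (3 * (1 - γ) / γ) * (N ^ (3:ℕ) * N ^ (3 * (1 - γ) / γ)) := by ring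
        _ = c₁ ^ (3 * (1 - γ) / γ) * N ^ ((3:ℝ) / γ) := by rw [hNe]
    -- put everything together
    calc ∑ v : V, (outDeg G v : ℝ) ^ 2
        = ∑ s ∈ Finset.range R, ∑ v ∈ Ablock G s, (outDeg G v : ℝ) ^ 2 := hstep1
      _ ≤ ∑ s ∈ Finset.range R, 2 * c₀ * N * x ^ s * M s ^ 2 :=
          Finset.sum_le_sum fun s _ => hstep2 s
      _ ≤ 8 * c₀ * N * (p ^ rs / (p - 1)) + 2 * c₀ * c₁ ^ 2 * N ^ 3 * (q ^ rs / (1 - q)) := hsplit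
      _ ≤ 8 * c₀ * N * ((4 * D) ^ (3 - γ) / (p - 1))
          + 2 * c₀ * c₁ ^ 2 * N ^ 3 * (D ^ (3 * (1 - γ)) / (1 - q)) := by
          apply add_le_add
          · exact mul_le_mul_of_nonneg_left
              (div_le_div_of_nonneg_right hprs (by linarith)) (by positivity)
          · exact mul_le_mul_of_nonneg_left
              (div_le_div_of_nonneg_right hqrs (by linarith)) (by positivity)
      _ = K₁ * N ^ ((3:ℝ) / γ) + K₂ * N ^ ((3:ℝ) / γ) := by
          rw [hK₁def, hK₂def]
          have l1 : 8 * c₀ * N * ((4 * D) ^ (3 - γ) / (p - 1))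
              = 8 * c₀ / (p - 1) * (N * (4 * D) ^ (3 - γ)) := by ring
          have l2 : 2 * c₀ * c₁ ^ 2 * N ^ 3 * (D ^ (3 * (1 - γ)) / (1 - q))
              = 2 * c₀ * c₁ ^ 2 / (1 - q) * (N ^ 3 * D ^ (3 * (1 - γ))) := by ring
          rw [l1, l2, e1, e2]
          ring
      _ = (K₁ + K₂) * N ^ ((3:ℝ) / γ) := by ring
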